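/- (Theorem 1) Let H_e ∈ ℂ^{n×n} be Hermitian positive semidefinite with eigenvalues λ_1 ≥ ⋯ ≥ λ_n and corresponding orthonormal eigenvectors v_1, …, v_n, and set V* = [v_1, …, v_m] ∈ ℂ^{n×m} for m ≤ n. Fix c ≥ 0. For any invertible matrix C ∈ ℂ^{m×m}, the matrix F* = V*·C has full column rank (so F*ᴴF* is positive definite), and the matrix P = F*·(F*ᴴF*)^{-1/2} (where (·)^{-1/2} is the inverse of the positive-definite square root) satisfies PᴴP = I_m and log₂ det(I_m + c·PᴴH_eP) = Σ_{i=1}^{m} log₂(1 + c·λ_i), which is the maximum of log₂ det(I_m + c·VᴴH_eV) over all semi-orthogonal V ∈ ℂ^{n×m}. -/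

import Mathlib

open Matrix ComplexOrder Finset

/-- The positive semidefinite square root of a positive semidefinite matrix, as defined in
Mathlib (December 2024), where it has since been removed. -/
noncomputable def Matrix.PosSemidef.sqrt {n : Type*} [Fintype n] [DecidableEq n]
    {𝕜 : Type*} [RCLike 𝕜] {A : Matrix n n 𝕜} (hA : A.PosSemidef) : Matrix n n 𝕜 :=
  hA.1.eigenvectorUnitary.1 * diagonal ((↑) ∘ (√·) ∘ hA.1.eigenvalues) *
  (star hA.1.eigenvectorUnitary : Matrix n n 𝕜)

open Matrix ComplexOrder Finset

private lemma detSum {R : Type*} [CommRing R] {m n : ℕ}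
    (A : Matrix (Fin m) (Fin n) R) (B : Matrix (Fin n) (Fin m) R) :
    (A * B).det = ∑ f : Fin m → Fin n, (A.submatrix id f).det * ∏ i, B (f i) i := by
  have key : ∀ σ : Equiv.Perm (Fin m),
      (∏ i, (A * B) (σ i) i)
        = ∑ f : Fin m → Fin n, (∏ i, A (σ i) (f i)) * ∏ i, B (f i) i := by
    intro σ
    simp only [Matrix.mul_apply]
    rw [Finset.prod_univ_sum (fun _ => (univ : Finset (Fin n)))
      (fun i k => A (σ i) k * B k i), Fintype.piFinset_univ]
    exact Finset.sum_congr rfl fun f _ => by rw [← Finset.prod_mul_distrib]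
  rw [Matrix.det_apply]
  simp_rw [key, Finset.smul_sum]
  rw [Finset.sum_comm]
  refine Finset.sum_congr rfl fun f _ => ?_
  rw [Matrix.det_apply, Finset.sum_mul]
  refine Finset.sum_congr rfl fun σ _ => ?_
  simp [Matrix.submatrix_apply, smul_mul_assoc]

private lemma strictMono_perm_eq_one {m : ℕ} (e : Equiv.Perm (Fin m))
    (he : StrictMono (⇑e)) : e = 1 := by
  haveI : WellFoundedLT (Fin m) := inferInstance
  have hsymm : StrictMono (⇑e.symm) := fun a b hab => by
    by_contra h
    have hle : e.symm b ≤ e.symm a := le_of_not_gt h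
    rcases eq_or_lt_of_le hle with h1 | h1
    · exact absurd (by simpa using congrArg e h1) (ne_of_gt hab)
    · exact absurd (by simpa using he h1) (not_lt.mpr hab.le)
  ext i
  have h1 : i ≤ e i := he.le_apply
  have h2 : e i ≤ i := by simpa using hsymm.le_apply (x := e i)
  simp [le_antisymm h2 h1]

open scoped Classical in
private lemma cauchyBinet {R : Type*} [CommRing R] {m n : ℕ}
    (A : Matrix (Fin m) (Fin n) R) (B : Matrix (Fin n) (Fin m) R) :
    (A * B).det = ∑ g ∈ Finset.univ.filter (fun g : Fin m → Fin n => StrictMono g),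
      (A.submatrix id g).det * (B.submatrix g id).det := by
  rw [detSum]
  rw [← Finset.sum_filter_add_sum_filter_not Finset.univ
    (fun f : Fin m → Fin n => Function.Injective f)]
  have h2 : ∑ f ∈ univ.filter (fun f : Fin m → Fin n => ¬ Function.Injective f),
      (A.submatrix id f).det * ∏ i, B (f i) i = 0 := by
    refine Finset.sum_eq_zero fun f hf => ?_
    rw [Finset.mem_filter] at hf
    have hf2 := hf.2
    simp only [Function.Injective] at hf2
    push_neg at hf2
    obtain ⟨i, j, hij, hne⟩ := hf2
    rw [Matrix.det_zero_of_column_eq hne fun k => by simp [hij], zero_mul]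
  rw [h2, add_zero]
  have reform : ∀ g ∈ univ.filter (fun g : Fin m → Fin n => StrictMono g),
      (A.submatrix id g).det * (B.submatrix g id).det
        = ∑ σ : Equiv.Perm (Fin m),
            (A.submatrix id (g ∘ σ)).det * ∏ i, B ((g ∘ σ) i) i := by
    intro g hg
    have hdet : ∀ σ : Equiv.Perm (Fin m),
        (A.submatrix id (g ∘ ⇑σ)).det
          = ((Equiv.Perm.sign σ : ℤ) : R) * (A.submatrix id g).det := by
      intro σ
      have h : A.submatrix id (g ∘ ⇑σ) = (A.submatrix id g).submatrix id ⇑σ := by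
        ext i j; simp
      rw [h, Matrix.det_permute']
    simp_rw [hdet]
    rw [Matrix.det_apply (B.submatrix g id), Finset.mul_sum]
    refine Finset.sum_congr rfl fun σ _ => ?_
    simp only [Matrix.submatrix_apply, id_eq, Function.comp_apply]
    rw [Units.smul_def, zsmul_eq_mul]
    push_cast
    ring
  rw [Finset.sum_congr rfl reform]
  rw [← Finset.sum_product' (s := univ.filter (fun g : Fin m → Fin n => StrictMono g))
      (t := (univ : Finset (Equiv.Perm (Fin m))))
      (f := fun g σ => (A.submatrix id (g ∘ ⇑σ)).det * ∏ i, B ((g ∘ ⇑σ) i) i)]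
  refine (Finset.sum_nbij'
    (i := fun (p : (Fin m → Fin n) × Equiv.Perm (Fin m)) => p.1 ∘ ⇑p.2)
    (j := fun (f : Fin m → Fin n) => (f ∘ ⇑(Tuple.sort f), (Tuple.sort f)⁻¹))
    ?_ ?_ ?_ ?_ ?_).symm
  · rintro ⟨g, σ⟩ hp
    simp only [Finset.mem_product, Finset.mem_filter, Finset.mem_univ, true_and] at hp ⊢
    exact hp.1.injective.comp σ.injective
  · intro f hf
    simp only [Finset.mem_filter, Finset.mem_univ, true_and] at hf
    simp only [Finset.mem_product, Finset.mem_filter, Finset.mem_univ, true_and, and_true]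
    exact (Tuple.monotone_sort f).strictMono_of_injective
      (hf.comp (Tuple.sort f).injective)
  · rintro ⟨g, σ⟩ hp
    simp only [Finset.mem_product, Finset.mem_filter, Finset.mem_univ, true_and,
      and_true] at hp
    have hτ : σ * Tuple.sort (g ∘ ⇑σ) = 1 := by
      apply strictMono_perm_eq_one
      have hmono : Monotone ((g ∘ ⇑σ) ∘ ⇑(Tuple.sort (g ∘ ⇑σ))) := Tuple.monotone_sort _
      have hinj : Function.Injective ((g ∘ ⇑σ) ∘ ⇑(Tuple.sort (g ∘ ⇑σ))) :=
        (hp.injective.comp σ.injective).comp (Tuple.sort _).injective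
      have hsm := hmono.strictMono_of_injective hinj
      intro a b hab
      have h3 : g ((σ * Tuple.sort (g ∘ ⇑σ)) a) < g ((σ * Tuple.sort (g ∘ ⇑σ)) b) := by
        simpa [Function.comp] using hsm hab
      exact hp.lt_iff_lt.mp h3
    have hτ' : Tuple.sort (g ∘ ⇑σ) = σ⁻¹ := eq_inv_of_mul_eq_one_right hτ
    have hcomp : (g ∘ ⇑σ) ∘ ⇑(σ⁻¹) = g := by
      funext x; simp
    show ((g ∘ ⇑σ) ∘ ⇑(Tuple.sort (g ∘ ⇑σ)), (Tuple.sort (g ∘ ⇑σ))⁻¹) = (g, σ)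
    rw [hτ', hcomp, inv_inv]
  · intro f hf
    show (f ∘ ⇑(Tuple.sort f)) ∘ ⇑((Tuple.sort f)⁻¹) = f
    funext x; simp
  · rintro ⟨g, σ⟩ hp
    rfl


private lemma fin_le_of_strictMono {m n : ℕ} {g : Fin m → Fin n} (hg : StrictMono g)
    (i : Fin m) : (i : ℕ) ≤ (g i : ℕ) := by
  have key : ∀ k : ℕ, ∀ i : Fin m, (i : ℕ) = k → k ≤ (g i : ℕ) := by
    intro k
    induction k with
    | zero => simp
    | succ j ih =>
      intro i hi
      have hj : j < m := by omega
      have h1 := ih ⟨j, hj⟩ rfl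
      have h2 : (⟨j, hj⟩ : Fin m) < i := by rw [Fin.lt_def]; simp; omega
      have h3 := hg h2
      rw [Fin.lt_def] at h3
      omega
  exact key _ i rfl

private lemma starDet {m n : ℕ} (W : Matrix (Fin n) (Fin m) ℂ) (g : Fin m → Fin n) :
    (Wᴴ.submatrix id g).det * (W.submatrix g id).det
      = ((Complex.normSq ((W.submatrix g id).det) : ℝ) : ℂ) := by
  have h : Wᴴ.submatrix id g = (W.submatrix g id)ᴴ := by
    ext i j; simp
  rw [h, Matrix.det_conjTranspose, Complex.star_def, mul_comm, Complex.mul_conj]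

private lemma bound {n m : ℕ} (hmn : m ≤ n) (d : Fin n → ℝ) (hd : Antitone d)
    (hd1 : ∀ i, 1 ≤ d i) (W : Matrix (Fin n) (Fin m) ℂ) (hW : Wᴴ * W = 1) :
    ∃ r : ℝ, (Wᴴ * Matrix.diagonal (fun i => (d i : ℂ)) * W).det = (r : ℂ) ∧
      0 < r ∧ r ≤ ∏ i : Fin m, d (Fin.castLE hmn i) := by
  classical
  set t : (Fin m → Fin n) → ℝ := fun g => Complex.normSq ((W.submatrix g id).det) with ht
  set SM := Finset.univ.filter (fun g : Fin m → Fin n => StrictMono g) with hSM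
  have hd0 : ∀ i, (0:ℝ) ≤ d i := fun i => le_trans zero_le_one (hd1 i)
  -- ∑ t = 1
  have hsum1 : ∑ g ∈ SM, t g = 1 := by
    have h1 : (Wᴴ * W).det = ∑ g ∈ SM, ((t g : ℝ) : ℂ) := by
      rw [cauchyBinet]
      exact Finset.sum_congr rfl fun g _ => starDet W g
    rw [hW, Matrix.det_one] at h1
    have h2 : ((1:ℝ) : ℂ) = ((∑ g ∈ SM, t g : ℝ) : ℂ) := by
      push_cast
      exact h1
    exact_mod_cast h2.symm
  -- factorization
  set E := Matrix.diagonal (fun i => ((Real.sqrt (d i) : ℝ) : ℂ)) with hE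
  have hEH : Eᴴ = E := by
    rw [hE, Matrix.diagonal_conjTranspose]
    exact congrArg Matrix.diagonal (funext fun i => by
      simp [Complex.star_def, Complex.conj_ofReal])
  have hEE : E * E = Matrix.diagonal (fun i => (d i : ℂ)) := by
    rw [hE, Matrix.diagonal_mul_diagonal]
    exact congrArg Matrix.diagonal (funext fun i => by
      rw [← Complex.ofReal_mul, Real.mul_self_sqrt (hd0 i)])
  have hfact : Wᴴ * Matrix.diagonal (fun i => (d i : ℂ)) * W = (E * W)ᴴ * (E * W) := by
    rw [Matrix.conjTranspose_mul, hEH, ← hEE]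
    simp only [Matrix.mul_assoc]
  -- per-term value
  have hterm : ∀ g ∈ SM, ((E * W)ᴴ.submatrix id g).det * ((E * W).submatrix g id).det
      = (((∏ i, d (g i)) * t g : ℝ) : ℂ) := by
    intro g _
    rw [starDet (E * W) g]
    congr 1
    have hz : (E * W).submatrix g id
        = Matrix.diagonal (fun i => ((Real.sqrt (d (g i)) : ℝ) : ℂ)) * (W.submatrix g id) := by
      ext i j
      simp [hE, Matrix.mul_apply, Matrix.diagonal, Finset.sum_ite_eq, Matrix.submatrix_apply]
    rw [hz, Matrix.det_mul, Matrix.det_diagonal, Complex.normSq_mul]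
    have : Complex.normSq (∏ i : Fin m, ((Real.sqrt (d (g i)) : ℝ) : ℂ))
        = ∏ i : Fin m, d (g i) := by
      rw [← Complex.ofReal_prod, Complex.normSq_ofReal, ← Finset.prod_mul_distrib]
      exact Finset.prod_congr rfl fun i _ => Real.mul_self_sqrt (hd0 _)
    rw [this, ht]
  refine ⟨∑ g ∈ SM, (∏ i, d (g i)) * t g, ?_, ?_, ?_⟩
  · rw [hfact, cauchyBinet, Finset.sum_congr rfl hterm]
    push_cast
    rfl
  · have hle : ∀ g ∈ SM, t g ≤ (∏ i, d (g i)) * t g := by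
      intro g _
      have h1 : (1:ℝ) ≤ ∏ i, d (g i) := by
        calc (1:ℝ) = ∏ _i : Fin m, 1 := by rw [Finset.prod_const_one]
        _ ≤ ∏ i, d (g i) := Finset.prod_le_prod (by simp) (fun i _ => hd1 _)
      exact le_mul_of_one_le_left (Complex.normSq_nonneg _) h1
    calc (0:ℝ) < 1 := one_pos
    _ = ∑ g ∈ SM, t g := hsum1.symm
    _ ≤ ∑ g ∈ SM, (∏ i, d (g i)) * t g := Finset.sum_le_sum hle
  · have hle : ∀ g ∈ SM, (∏ i, d (g i)) * t g
        ≤ (∏ i : Fin m, d (Fin.castLE hmn i)) * t g := by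
      intro g hg
      rw [hSM, Finset.mem_filter] at hg
      refine mul_le_mul_of_nonneg_right ?_ (Complex.normSq_nonneg _)
      refine Finset.prod_le_prod (fun i _ => hd0 _) fun i _ => ?_
      refine hd ?_
      rw [Fin.le_def]
      exact fin_le_of_strictMono hg.2 i
    calc ∑ g ∈ SM, (∏ i, d (g i)) * t g
        ≤ ∑ g ∈ SM, (∏ i : Fin m, d (Fin.castLE hmn i)) * t g := Finset.sum_le_sum hle
    _ = (∏ i : Fin m, d (Fin.castLE hmn i)) * ∑ g ∈ SM, t g := by rw [Finset.mul_sum]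
    _ = _ := by rw [hsum1, mul_one]

private lemma psdSqrt_herm {m : ℕ} {A : Matrix (Fin m) (Fin m) ℂ} (hA : A.PosSemidef) :
    (hA.sqrt)ᴴ = hA.sqrt := by
  unfold Matrix.PosSemidef.sqrt
  simp [Matrix.conjTranspose_mul, Matrix.diagonal_conjTranspose, Matrix.star_eq_conjTranspose,
    Matrix.mul_assoc, Function.comp_def, Pi.star_def, Complex.star_def, Complex.conj_ofReal]

private lemma psdSqrt_mul_self {m : ℕ} {A : Matrix (Fin m) (Fin m) ℂ} (hA : A.PosSemidef) :
    hA.sqrt * hA.sqrt = A := by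
  unfold Matrix.PosSemidef.sqrt
  set V := hA.1.eigenvectorUnitary
  have hV : (star V : Matrix (Fin m) (Fin m) ℂ) * V = 1 := Unitary.coe_star_mul_self V
  have key : ∀ (W Ws D : Matrix (Fin m) (Fin m) ℂ), Ws * W = 1 →
      W * D * Ws * (W * D * Ws) = W * (D * D) * Ws := by
    intro W Ws D h
    rw [show W * D * Ws * (W * D * Ws) = W * D * (Ws * W) * D * Ws by
      simp only [Matrix.mul_assoc], h, Matrix.mul_one, Matrix.mul_assoc W D D]
  rw [key _ _ _ hV, diagonal_mul_diagonal]
  conv_rhs => rw [hA.1.spectral_theorem, Unitary.conjStarAlgAut_apply]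
  congr 3
  funext i
  simp only [Function.comp_apply]
  rw [← RCLike.ofReal_mul, Real.mul_self_sqrt (hA.eigenvalues_nonneg i)]

/-- Theorem 1: Let `H_e ∈ ℂ^{n×n}` be Hermitian positive semidefinite with
eigenvalues `λ_1 ≥ … ≥ λ_n` and corresponding orthonormal eigenvectors given by the columns of
a unitary `U` (so `H_e = U diag(λ) Uᴴ` with `λ` antitone), and set `V* = [v_1, …, v_m]`,
the first `m ≤ n` columns of `U`. Fix `c ≥ 0`. For any invertible `C ∈ ℂ^{m×m}`, the matrix
`F* = V* C` has full column rank (so `F*ᴴF*` is positive definite), and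
`P = F* (F*ᴴF*)^{-1/2}` satisfies `PᴴP = I` and
`log₂ det(I + c PᴴH_eP) = ∑_{i=1}^m log₂(1 + c λ_i)`, which is the maximum of
`log₂ det(I + c VᴴH_eV)` over all semi-orthogonal `V ∈ ℂ^{n×m}`. -/
theorem stmt_5 {n m : ℕ} (hmn : m ≤ n)
    (He : Matrix (Fin n) (Fin n) ℂ) (hHe : He.PosSemidef)
    (μ : Fin n → ℝ) (hμ : Antitone μ)
    (U : Matrix (Fin n) (Fin n) ℂ) (hU : Uᴴ * U = 1)
    (hdec : He = U * Matrix.diagonal (fun i => (μ i : ℂ)) * Uᴴ)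
    (c : ℝ) (hc : 0 ≤ c)
    (C : Matrix (Fin m) (Fin m) ℂ) (hC : IsUnit C.det)
    (Vs : Matrix (Fin n) (Fin m) ℂ)
    (hVs : Vs = U.submatrix id (Fin.castLE hmn))
    (F : Matrix (Fin n) (Fin m) ℂ) (hF : F = Vs * C) :
    F.rank = m ∧ (Fᴴ * F).PosDef ∧
    ∀ hpd : (Fᴴ * F).PosDef,
      (F * (hpd.posSemidef.sqrt)⁻¹)ᴴ * (F * (hpd.posSemidef.sqrt)⁻¹) = 1 ∧
      Real.logb 2
          ((1 + (c : ℂ) •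
            ((F * (hpd.posSemidef.sqrt)⁻¹)ᴴ * He * (F * (hpd.posSemidef.sqrt)⁻¹))).det).re
        = ∑ i : Fin m, Real.logb 2 (1 + c * μ (Fin.castLE hmn i)) ∧
      ∀ V : Matrix (Fin n) (Fin m) ℂ, Vᴴ * V = 1 →
        Real.logb 2 ((1 + (c : ℂ) • (Vᴴ * He * V)).det).re
          ≤ ∑ i : Fin m, Real.logb 2 (1 + c * μ (Fin.castLE hmn i)) := by
  classical
  have hUU : U * Uᴴ = 1 := mul_eq_one_comm.mp hU
  -- orthonormality of the selected columns
  have hVV : Vsᴴ * Vs = 1 := by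
    subst hVs
    have h : (U.submatrix id (Fin.castLE hmn))ᴴ * U.submatrix id (Fin.castLE hmn)
        = (Uᴴ * U).submatrix (Fin.castLE hmn) (Fin.castLE hmn) := by
      ext i j
      simp [Matrix.mul_apply]
    rw [h, hU]
    ext i j
    simp [Matrix.one_apply, Fin.castLE_inj]
  have hFF : Fᴴ * F = Cᴴ * C := by
    rw [hF, Matrix.conjTranspose_mul]
    have h : Cᴴ * Vsᴴ * (Vs * C) = Cᴴ * ((Vsᴴ * Vs) * C) := by
      simp only [Matrix.mul_assoc]
    rw [h, hVV, one_mul]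
  have hdetFF : IsUnit (Fᴴ * F).det := by
    rw [hFF, Matrix.det_mul, Matrix.det_conjTranspose]
    exact hC.star.mul hC
  have hposdef : (Fᴴ * F).PosDef := by
    have hinj : Function.Injective ((Fᴴ * F).mulVec) :=
      Matrix.mulVec_injective_iff_isUnit.mpr ((Matrix.isUnit_iff_isUnit_det _).mpr hdetFF)
    refine Matrix.PosDef.conjTranspose_mul_self F fun a b hab => hinj ?_
    rw [← Matrix.mulVec_mulVec, ← Matrix.mulVec_mulVec, hab]
  have hrank : F.rank = m := by
    have h1 : (Fᴴ * F).rank = F.rank := Matrix.rank_conjTranspose_mul_self F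
    rw [Matrix.rank_of_isUnit _ ((Matrix.isUnit_iff_isUnit_det _).mpr hdetFF),
      Fintype.card_fin] at h1
    exact h1.symm
  -- diagonalization
  have hdiag : Uᴴ * He * U = Matrix.diagonal (fun i => (μ i : ℂ)) := by
    rw [hdec]
    have h3 : Uᴴ * (U * Matrix.diagonal (fun i => (μ i : ℂ)) * Uᴴ) * U
        = (Uᴴ * U) * Matrix.diagonal (fun i => (μ i : ℂ)) * (Uᴴ * U) := by
      simp only [Matrix.mul_assoc]
    rw [h3, hU, one_mul, mul_one]
  have hμ0 : ∀ i, 0 ≤ μ i := by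
    intro i
    have hpsd : (Uᴴ * He * U).PosSemidef := by
      have h := hHe.mul_mul_conjTranspose_same Uᴴ
      simpa using h
    rw [hdiag] at hpsd
    have h := Matrix.posSemidef_diagonal_iff.mp hpsd i
    exact_mod_cast Complex.zero_le_real.mp h
  set d : Fin n → ℝ := fun i => 1 + c * μ i with hd_def
  have hd : Antitone d := fun a b hab => by
    have h := hμ hab
    simp only [hd_def]
    nlinarith
  have hd1 : ∀ i, 1 ≤ d i := fun i => by
    simp only [hd_def]
    nlinarith [hμ0 i]
  have hdpos : ∀ i, (0:ℝ) < d i := fun i => lt_of_lt_of_le one_pos (hd1 i)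
  have hDd : U * Matrix.diagonal (fun i => (d i : ℂ)) * Uᴴ = 1 + (c:ℂ) • He := by
    have h : Matrix.diagonal (fun i => (d i : ℂ))
        = 1 + (c:ℂ) • Matrix.diagonal (fun i => (μ i : ℂ)) := by
      ext i j
      by_cases hij : i = j <;>
        simp [hij, Matrix.diagonal_apply, Matrix.one_apply, hd_def] <;> push_cast <;> ring
    rw [h, Matrix.mul_add, Matrix.add_mul, Matrix.mul_one, Matrix.mul_smul, Matrix.smul_mul,
      hUU, ← hdec]
  have hlogprod : Real.logb 2 (∏ i : Fin m, d (Fin.castLE hmn i))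
      = ∑ i : Fin m, Real.logb 2 (1 + c * μ (Fin.castLE hmn i)) := by
    simp only [Real.logb]
    rw [Real.log_prod (fun i _ => (hdpos (Fin.castLE hmn i)).ne'), Finset.sum_div]
  have hmain : ∀ V : Matrix (Fin n) (Fin m) ℂ, Vᴴ * V = 1 →
      ∃ r : ℝ, (1 + (c:ℂ) • (Vᴴ * He * V)).det = (r:ℂ) ∧ 0 < r ∧
        r ≤ ∏ i : Fin m, d (Fin.castLE hmn i) := by
    intro V hV
    set W := Uᴴ * V with hWdef
    have hWW : Wᴴ * W = 1 := by
      rw [hWdef, Matrix.conjTranspose_mul, Matrix.conjTranspose_conjTranspose]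
      have h : Vᴴ * U * (Uᴴ * V) = Vᴴ * (U * Uᴴ) * V := by simp only [Matrix.mul_assoc]
      rw [h, hUU, Matrix.mul_one, hV]
    obtain ⟨r, h1, h2, h3⟩ := bound hmn d hd hd1 W hWW
    refine ⟨r, ?_, h2, h3⟩
    rw [← h1]
    congr 1
    rw [hWdef, Matrix.conjTranspose_mul, Matrix.conjTranspose_conjTranspose]
    have h4 : Vᴴ * U * Matrix.diagonal (fun i => (d i : ℂ)) * (Uᴴ * V)
        = Vᴴ * (U * Matrix.diagonal (fun i => (d i : ℂ)) * Uᴴ) * V := by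
      simp only [Matrix.mul_assoc]
    rw [h4, hDd, Matrix.mul_add, Matrix.add_mul, Matrix.mul_one, Matrix.mul_smul,
      Matrix.smul_mul, hV]
  refine ⟨hrank, hposdef, fun hpd => ?_⟩
  set S := hpd.posSemidef.sqrt with hS_def
  have hSH : Sᴴ = S := psdSqrt_herm hpd.posSemidef
  have hSS : S * S = Fᴴ * F := psdSqrt_mul_self hpd.posSemidef
  have hdetS : IsUnit S.det := by
    have h : S.det * S.det = (Fᴴ * F).det := by rw [← Matrix.det_mul, hSS]
    refine isUnit_iff_ne_zero.mpr fun h0 => hdetFF.ne_zero ?_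
    rw [← h, h0, mul_zero]
  have hSinv : S * S⁻¹ = 1 := Matrix.mul_nonsing_inv S hdetS
  have hinvS : S⁻¹ * S = 1 := Matrix.nonsing_inv_mul S hdetS
  have hSinvH : S⁻¹ᴴ = S⁻¹ := by rw [Matrix.conjTranspose_nonsing_inv, hSH]
  have hPP : (F * S⁻¹)ᴴ * (F * S⁻¹) = 1 := by
    rw [Matrix.conjTranspose_mul, hSinvH]
    calc S⁻¹ * Fᴴ * (F * S⁻¹) = S⁻¹ * (Fᴴ * F) * S⁻¹ := by simp only [Matrix.mul_assoc]
    _ = S⁻¹ * (S * S) * S⁻¹ := by rw [hSS]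
    _ = (S⁻¹ * S) * (S * S⁻¹) := by simp only [Matrix.mul_assoc]
    _ = 1 := by rw [hinvS, hSinv, one_mul]
  refine ⟨hPP, ?_, ?_⟩
  · -- equality for P
    set Q := C * S⁻¹ with hQ_def
    have hCC : Cᴴ * C = S * S := by rw [hSS, hFF]
    have hQQ : Qᴴ * Q = 1 := by
      rw [hQ_def, Matrix.conjTranspose_mul, hSinvH]
      calc S⁻¹ * Cᴴ * (C * S⁻¹) = S⁻¹ * (Cᴴ * C) * S⁻¹ := by simp only [Matrix.mul_assoc]
      _ = S⁻¹ * (S * S) * S⁻¹ := by rw [hCC]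
      _ = (S⁻¹ * S) * (S * S⁻¹) := by simp only [Matrix.mul_assoc]
      _ = 1 := by rw [hinvS, hSinv, one_mul]
    have hPQ : F * S⁻¹ = Vs * Q := by rw [hF, hQ_def, Matrix.mul_assoc]
    have hVsHeVs : Vsᴴ * He * Vs
        = Matrix.diagonal (fun i : Fin m => (μ (Fin.castLE hmn i) : ℂ)) := by
      have h1 : Vsᴴ * He * Vs
          = (Uᴴ * He * U).submatrix (Fin.castLE hmn) (Fin.castLE hmn) := by
        subst hVs
        ext i j
        simp [Matrix.mul_apply]
      rw [h1, hdiag, Matrix.submatrix_diagonal _ _ (Fin.castLE_injective hmn)]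
      rfl
    have hPHeP : (F * S⁻¹)ᴴ * He * (F * S⁻¹)
        = Qᴴ * Matrix.diagonal (fun i : Fin m => (μ (Fin.castLE hmn i) : ℂ)) * Q := by
      rw [hPQ, Matrix.conjTranspose_mul]
      have h : Qᴴ * Vsᴴ * He * (Vs * Q) = Qᴴ * (Vsᴴ * He * Vs) * Q := by
        simp only [Matrix.mul_assoc]
      rw [h, hVsHeVs]
    have hform : 1 + (c:ℂ) • ((F * S⁻¹)ᴴ * He * (F * S⁻¹))
        = Qᴴ * Matrix.diagonal (fun i : Fin m => (d (Fin.castLE hmn i) : ℂ)) * Q := by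
      have hDm : Matrix.diagonal (fun i : Fin m => (d (Fin.castLE hmn i) : ℂ))
          = 1 + (c:ℂ) • Matrix.diagonal (fun i : Fin m => (μ (Fin.castLE hmn i) : ℂ)) := by
        ext i j
        by_cases hij : i = j <;>
          simp [hij, Matrix.diagonal_apply, Matrix.one_apply, hd_def] <;> push_cast <;> ring
      rw [hDm, Matrix.mul_add, Matrix.add_mul, Matrix.mul_one, Matrix.mul_smul,
        Matrix.smul_mul, hQQ, hPHeP]
    have hdet : (1 + (c:ℂ) • ((F * S⁻¹)ᴴ * He * (F * S⁻¹))).det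
        = ((∏ i : Fin m, d (Fin.castLE hmn i) : ℝ) : ℂ) := by
      rw [hform, Matrix.det_mul, Matrix.det_mul]
      have h : Qᴴ.det * (Matrix.diagonal (fun i : Fin m => (d (Fin.castLE hmn i) : ℂ))).det
            * Q.det
          = (Qᴴ.det * Q.det)
            * (Matrix.diagonal (fun i : Fin m => (d (Fin.castLE hmn i) : ℂ))).det := by
        ring
      rw [h, ← Matrix.det_mul, hQQ, Matrix.det_one, one_mul, Matrix.det_diagonal]
      push_cast
      rfl
    rw [hdet, Complex.ofReal_re, hlogprod]
  · -- maximality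
    intro V hV
    obtain ⟨r, h1, h2, h3⟩ := hmain V hV
    rw [h1, Complex.ofReal_re, ← hlogprod]
    exact Real.logb_le_logb_of_le one_lt_two h2 h3
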